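/- arXiv:1511.00020 — 5 statements merged into one kernel-verified Lean document; each statement's English description precedes it below -/
import Mathlib

section
/- (Hasse–Davenport product relation) For any multiplicative character A on F_q (q odd), A(4)·G(A)·G(Aφ) = G(A²)·G(φ), where φ is the quadratic character. -/
open Complex Finset

variable {F : Type*} [Field F] [Fintype F]

/-- Canonical additive character `ζ^y = exp((2πi/p)·Tr_{F_q/F_p}(y))`. -/
noncomputable def zetaChar (p : ℕ) [Fact p.Prime] [CharP F p] (y : F) : ℂ :=
  letI := ZMod.algebra F p
  Complex.exp (2 * Real.pi * Complex.I * ((Algebra.trace (ZMod p) F y).val : ℂ) / p)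

/-- Gauss sum `G(A) = Σ_y A(y) ζ^y`. -/
noncomputable def gaussS (p : ℕ) [Fact p.Prime] [CharP F p] (A : MulChar F ℂ) : ℂ :=
  ∑ y : F, A y * zetaChar p y

/-- Jacobi sum `J(A,B) = Σ_y A(y) B(1-y)`. -/
noncomputable def jacobiS (A B : MulChar F ℂ) : ℂ :=
  ∑ y : F, A y * B (1 - y)

/-- Finite field hypergeometric `₂F₁(A,B;C;x) = (ε(x)/q) Σ_y B(y) B̄C(y-1) Ā(1-xy)`. -/
noncomputable def F21 (A B C : MulChar F ℂ) (x : F) : ℂ :=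
  ((1 : MulChar F ℂ) x / (Fintype.card F : ℂ)) *
    ∑ y : F, B y * (B⁻¹ * C) (y - 1) * A⁻¹ (1 - x * y)

/-- Binomial coefficient `(A choose B) = (B(-1)/q) J(A, B̄)`. -/
noncomputable def binom (A B : MulChar F ℂ) : ℂ :=
  B (-1) / (Fintype.card F : ℂ) * jacobiS A B⁻¹

/-- Pseudo hypergeometric function `F*(C,D;x)`. -/
noncomputable def Fstar (C D : MulChar F ℂ) (x : F) : ℂ :=
  letI : Fintype (MulChar F ℂ) := Fintype.ofFinite _
  (Fintype.card F : ℂ) / ((Fintype.card F : ℂ) - 1) *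
      ∑ χ : MulChar F ℂ, binom (C * χ ^ 2) χ * binom (C * χ) (D * χ) * χ (x / 4)
    + (C * D) (-1) * C⁻¹ (x / 4) / (Fintype.card F : ℂ)

/-! ### Auxiliary results: the canonical additive character as an `AddChar` -/

section Psi

variable (p : ℕ) [Fact p.Prime] [CharP F p]

/-- The canonical additive character as a bundled `AddChar`. -/
noncomputable def psiF : AddChar F ℂ :=
  letI := ZMod.algebra F p
  haveI : NeZero p := ⟨(Fact.out : p.Prime).ne_zero⟩
  (AddChar.zmodChar p
      ((Complex.isPrimitiveRoot_exp p (Fact.out : p.Prime).ne_zero).pow_eq_one)).compAddMonoidHom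
    (Algebra.trace (ZMod p) F).toAddMonoidHom

lemma psiF_apply (y : F) : psiF (F := F) p y = zetaChar p y := by
  letI := ZMod.algebra F p
  haveI : NeZero p := ⟨(Fact.out : p.Prime).ne_zero⟩
  show Complex.exp (2 * Real.pi * Complex.I / p) ^ (Algebra.trace (ZMod p) F y).val = _
  rw [zetaChar, ← Complex.exp_nat_mul]
  congr 1
  ring

lemma gaussS_eq (A : MulChar F ℂ) : gaussS p A = gaussSum A (psiF p) :=
  Finset.sum_congr rfl fun y _ => by rw [psiF_apply]

lemma psiF_primitive : (psiF (F := F) p).IsPrimitive := by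
  letI := ZMod.algebra F p
  haveI : NeZero p := ⟨(Fact.out : p.Prime).ne_zero⟩
  apply AddChar.IsPrimitive.of_ne_one
  intro h
  have hrc : ringChar F = p := ringChar.eq F p
  subst hrc
  obtain ⟨b, hb⟩ := FiniteField.trace_to_zmod_nondegenerate F (one_ne_zero (α := F))
  rw [one_mul] at hb
  have hval : (Algebra.trace (ZMod (ringChar F)) F b).val ≠ 0 := by
    simpa [ZMod.val_eq_zero] using hb
  have h1 := DFunLike.congr_fun h b
  rw [AddChar.one_apply] at h1
  have h2 : Complex.exp (2 * Real.pi * Complex.I / (ringChar F)) ^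
      (Algebra.trace (ZMod (ringChar F)) F b).val = 1 := h1
  have hdvd := (Complex.isPrimitiveRoot_exp (ringChar F)
    (Fact.out : (ringChar F).Prime).ne_zero).pow_eq_one_iff_dvd _ |>.mp h2
  have hlt : (Algebra.trace (ZMod (ringChar F)) F b).val < ringChar F := ZMod.val_lt _
  exact hval (Nat.eq_zero_of_dvd_of_lt hdvd hlt)

end Psi

/-! ### Auxiliary results: the abstract quadratic character -/

section Quad

variable [DecidableEq F]

lemma phi_eq_qc (hp2 : ringChar F ≠ 2) {φ : MulChar F ℂ} (hφ : φ ≠ 1) (hφ2 : φ * φ = 1)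
    (x : F) : φ x = ((quadraticChar F x : ℤ) : ℂ) := by
  by_cases hx : x = 0
  · simp [hx, MulChar.map_zero]
  have hself : ∀ z : F, z ≠ 0 → φ z * φ z = 1 := by
    intro z hz
    rw [← MulChar.mul_apply, hφ2, MulChar.one_apply (Ne.isUnit hz)]
  have hsq : ∀ z : F, z ≠ 0 → IsSquare z → φ z = 1 := by
    rintro z hz ⟨s, rfl⟩
    have hs : s ≠ 0 := fun h => hz (by simp [h])
    rw [map_mul]
    exact hself s hs
  by_cases hsqx : IsSquare x
  · rw [hsq x hx hsqx, (quadraticChar_one_iff_isSquare hx).mpr hsqx]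
    norm_num
  · rw [quadraticChar_neg_one_iff_not_isSquare.mpr hsqx]
    rcases mul_self_eq_one_iff.mp (hself x hx) with h1 | h1
    · exfalso
      apply hφ
      apply MulChar.ext
      intro a
      rw [MulChar.one_apply_coe]
      have ha : (a : F) ≠ 0 := a.ne_zero
      by_cases hsa : IsSquare (a : F)
      · exact hsq _ ha hsa
      · have hxi : (x⁻¹ : F) ≠ 0 := inv_ne_zero hx
        have hxa : (x⁻¹ * (a : F)) ≠ 0 := mul_ne_zero hxi ha
        have hqc : quadraticChar F (x⁻¹ * (a : F)) = 1 := by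
          have hm1 : quadraticChar F x⁻¹ = -1 := by
            have hm : quadraticChar F x * quadraticChar F x⁻¹ = 1 := by
              rw [← map_mul, mul_inv_cancel₀ hx, map_one]
            rw [quadraticChar_neg_one_iff_not_isSquare.mpr hsqx, neg_one_mul] at hm
            linarith
          rw [map_mul, hm1, quadraticChar_neg_one_iff_not_isSquare.mpr hsa]
          ring
        have hsq2 : IsSquare (x⁻¹ * (a : F)) := (quadraticChar_one_iff_isSquare hxa).mp hqc
        have hxaa : (a : F) = x * (x⁻¹ * (a : F)) := by field_simp
        rw [hxaa, map_mul, h1, hsq _ hxa hsq2, one_mul]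
    · rw [h1]; norm_num

lemma sum_sq_reindex (hp2 : ringChar F ≠ 2) {φ : MulChar F ℂ} (hφ : φ ≠ 1) (hφ2 : φ * φ = 1)
    (f : F → ℂ) : ∑ u : F, f (u ^ 2) = ∑ t : F, (1 + φ t) * f t := by
  classical
  have key : ∀ t : F, ((univ.filter (fun u : F => u ^ 2 = t)).card : ℂ) = 1 + φ t := by
    intro t
    have hcs := quadraticChar_card_sqrts hp2 t
    have hfin : {x : F | x ^ 2 = t}.toFinset = univ.filter (fun u : F => u ^ 2 = t) := by
      ext u; simp
    rw [hfin] at hcs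
    have hcast : ((univ.filter (fun u : F => u ^ 2 = t)).card : ℂ) =
        (((univ.filter (fun u : F => u ^ 2 = t)).card : ℤ) : ℂ) := by push_cast; ring
    rw [hcast, hcs, phi_eq_qc hp2 hφ hφ2]
    push_cast
    ring
  rw [← Finset.sum_fiberwise' univ (fun u : F => u ^ 2) f]
  refine Finset.sum_congr rfl fun t _ => ?_
  rw [Finset.sum_const, nsmul_eq_mul, key, mul_comm]

lemma key_jacobi (hp2 : ringChar F ≠ 2) {φ A : MulChar F ℂ} (hφ : φ ≠ 1) (hφ2 : φ * φ = 1)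
    (hA : A ≠ 1) : A (4 : F) * jacobiSum A A = jacobiSum φ A := by
  have h2 : (2 : F) ≠ 0 := Ring.two_ne_zero hp2
  let e : F ≃ F :=
    { toFun := fun u => (1 - u) / 2
      invFun := fun y => 1 - 2 * y
      left_inv := fun u => by field_simp; ring
      right_inv := fun y => by field_simp; ring }
  calc A (4 : F) * jacobiSum A A = ∑ y : F, A (4 * (y * (1 - y))) := by
        rw [jacobiSum, mul_sum]
        exact sum_congr rfl fun y _ => by rw [map_mul, map_mul]
    _ = ∑ u : F, A (4 * (e u * (1 - e u))) :=
        (Equiv.sum_comp e fun y => A (4 * (y * (1 - y)))).symm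
    _ = ∑ u : F, A (1 - u ^ 2) := by
        refine sum_congr rfl fun u _ => ?_
        congr 1
        show 4 * ((1 - u) / 2 * (1 - (1 - u) / 2)) = 1 - u ^ 2
        field_simp
        ring
    _ = ∑ t : F, (1 + φ t) * A (1 - t) := sum_sq_reindex hp2 hφ hφ2 (fun t => A (1 - t))
    _ = ∑ t : F, A (1 - t) + ∑ t : F, φ t * A (1 - t) := by
        rw [← Finset.sum_add_distrib]
        exact sum_congr rfl fun t _ => by ring
    _ = jacobiSum φ A := by
        have hz : ∑ t : F, A (1 - t) = ∑ s : F, A s :=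
          Fintype.sum_equiv (Equiv.subLeft 1) _ _ fun t => rfl
        rw [hz, MulChar.sum_eq_zero_of_ne_one hA, zero_add, jacobiSum]

end Quad

/-- Hasse–Davenport product relation:
`A(4) G(A) G(Aφ) = G(A²) G(φ)` for the quadratic character `φ`. -/
theorem hasse_davenport (p : ℕ) [Fact p.Prime] [CharP F p] (hp : p ≠ 2)
    (φ : MulChar F ℂ) (hφ : φ ≠ 1) (hφ2 : φ * φ = 1) (A : MulChar F ℂ) :
    A (4 : F) * gaussS p A * gaussS p (A * φ) = gaussS p (A ^ 2) * gaussS p φ := by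
  classical
  have hp2 : ringChar F ≠ 2 := by rw [ringChar.eq F p]; exact hp
  have h2 : (2 : F) ≠ 0 := Ring.two_ne_zero hp2
  have h4 : (4 : F) ≠ 0 := by
    have h : (4 : F) = 2 * 2 := by norm_num
    rw [h]; exact mul_ne_zero h2 h2
  have hψ : (psiF (F := F) p).IsPrimitive := psiF_primitive p
  have hcard : (Fintype.card F : ℂ) ≠ 0 := Nat.cast_ne_zero.mpr Fintype.card_ne_zero
  rw [gaussS_eq, gaussS_eq, gaussS_eq, gaussS_eq]
  by_cases hA1 : A = 1
  · rw [hA1]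
    simp [MulChar.one_apply (Ne.isUnit h4)]
  by_cases hA2 : A * A = 1
  · have hAφ : A = φ := MulChar.ext fun a => by
      rw [phi_eq_qc hp2 hA1 hA2, phi_eq_qc hp2 hφ hφ2]
    rw [hAφ, pow_two, hφ2]
    have hφ4 : φ (4 : F) = 1 := by
      have h : (4 : F) = 2 * 2 := by norm_num
      rw [h, map_mul, ← MulChar.mul_apply, hφ2, MulChar.one_apply (Ne.isUnit h2)]
    rw [hφ4, one_mul]
    ring
  -- main case
  have hφA1 : φ * A ≠ 1 := by
    intro h
    apply hA2
    have hh : (φ * A) * (φ * A) = 1 := by rw [h, mul_one]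
    rwa [mul_mul_mul_comm, hφ2, one_mul] at hh
  have hGA : gaussSum A (psiF p) ≠ 0 := gaussSum_ne_zero_of_nontrivial hcard hA1 hψ
  have hGφ : gaussSum φ (psiF p) ≠ 0 := gaussSum_ne_zero_of_nontrivial hcard hφ hψ
  have e1 := jacobiSum_mul_nontrivial hA2 (psiF (F := F) p)
  have e2 := jacobiSum_mul_nontrivial hφA1 (psiF (F := F) p)
  have ekey := key_jacobi hp2 hφ hφ2 hA1
  have hJ : jacobiSum φ A ≠ 0 := by
    intro h
    rw [h, mul_zero] at e2
    exact mul_ne_zero hGφ hGA e2.symm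
  rw [pow_two, mul_comm A φ]
  apply mul_right_cancel₀ hJ
  calc A (4 : F) * gaussSum A (psiF p) * gaussSum (φ * A) (psiF p) * jacobiSum φ A
      = A (4 : F) * gaussSum A (psiF p) * (gaussSum (φ * A) (psiF p) * jacobiSum φ A) := by
        ring
    _ = A (4 : F) * gaussSum A (psiF p) * (gaussSum φ (psiF p) * gaussSum A (psiF p)) := by
        rw [e2]
    _ = gaussSum φ (psiF p) * (A (4 : F) * (gaussSum A (psiF p) * gaussSum A (psiF p))) := by
        ring
    _ = gaussSum φ (psiF p) * (A (4 : F) * (gaussSum (A * A) (psiF p) * jacobiSum A A)) := by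
        rw [e1]
    _ = gaussSum φ (psiF p) * (gaussSum (A * A) (psiF p) * (A (4 : F) * jacobiSum A A)) := by
        ring
    _ = gaussSum φ (psiF p) * (gaussSum (A * A) (psiF p) * jacobiSum φ A) := by
        rw [ekey]
    _ = gaussSum (A * A) (psiF p) * gaussSum φ (psiF p) * jacobiSum φ A := by
        ring
end

section
/- Let C ≠ D be multiplicative characters on F_q and x ∈ F_q with x ∉ {0,1}. Then the pseudo hypergeometric function satisfies F*(C,D;x) = (C(2)/q) · Σ_{t ∈ F_q} C D̄²(1-t) · C̄D(1-x-t²). -/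
open Complex Finset
set_option linter.unusedSectionVars false
set_option maxHeartbeats 1600000

variable {F : Type*} [Field F] [Fintype F]

lemma mc_ne (A : MulChar F ℂ) {a : F} (h : a ≠ 0) : A a ≠ 0 := by
  intro h0
  have h1 : A a * A a⁻¹ = 1 := by rw [← map_mul, mul_inv_cancel₀ h, MulChar.map_one]
  rw [h0, zero_mul] at h1
  exact zero_ne_one h1

lemma mc_inv (A : MulChar F ℂ) (a : F) : A a⁻¹ = (A a)⁻¹ := by
  rcases eq_or_ne a 0 with rfl | h
  · rw [inv_zero, MulChar.map_zero, inv_zero]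
  · exact eq_inv_of_mul_eq_one_left (by rw [← map_mul, inv_mul_cancel₀ h, MulChar.map_one])

lemma mc_neg_one (A : MulChar F ℂ) : A (-1) * A (-1) = 1 := by
  rw [← map_mul]; norm_num

lemma sum_mulChar_zero [Fintype (MulChar F ℂ)] {a : F} (ha : a ≠ 1) :
    ∑ χ : MulChar F ℂ, χ a = 0 := by
  haveI : NeZero ((Monoid.exponent Fˣ : ℂ)) :=
    ⟨Nat.cast_ne_zero.mpr (Monoid.exponent_ne_zero_of_finite)⟩
  obtain ⟨χ, hχ⟩ := MulChar.exists_apply_ne_one_of_hasEnoughRootsOfUnity F ℂ ha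
  refine eq_zero_of_mul_eq_self_left hχ ?_
  simp only [Finset.mul_sum, ← MulChar.mul_apply]
  exact Fintype.sum_bijective _ (Group.mulLeft_bijective χ) _ _ fun χ' ↦ rfl

lemma sum_mulChar_one [Fintype (MulChar F ℂ)] :
    ∑ χ : MulChar F ℂ, χ (1 : F) = (Fintype.card F : ℂ) - 1 := by
  haveI : NeZero ((Monoid.exponent Fˣ : ℂ)) :=
    ⟨Nat.cast_ne_zero.mpr (Monoid.exponent_ne_zero_of_finite)⟩
  have hc : Nat.card (MulChar F ℂ) = Nat.card Fˣ :=
    MulChar.card_eq_card_units_of_hasEnoughRootsOfUnity F ℂ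
  simp only [MulChar.map_one, Finset.sum_const, Finset.card_univ, nsmul_eq_mul, mul_one]
  rw [← Nat.card_eq_fintype_card, hc, Nat.card_units, Nat.card_eq_fintype_card]
  have h1 : (1 : ℕ) ≤ Fintype.card F := Fintype.card_pos
  push_cast [Nat.cast_sub h1]
  ring

lemma sum_mulChar [Fintype (MulChar F ℂ)] [DecidableEq F] (a : F) :
    ∑ χ : MulChar F ℂ, χ a = if a = 1 then (Fintype.card F : ℂ) - 1 else 0 := by
  split_ifs with h
  · rw [h]; exact sum_mulChar_one
  · exact sum_mulChar_zero h

lemma binom_term (C D χ : MulChar F ℂ) (x : F) :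
    binom (C * χ ^ 2) χ * binom (C * χ) (D * χ) * χ (x / 4) =
    ∑ y : F, ∑ z : F,
      (D (-1) / (Fintype.card F : ℂ) ^ 2 * (C y * C z * D⁻¹ (1 - z))) *
        χ (y * y * z * (x / 4) * (1 - y)⁻¹ * (1 - z)⁻¹) := by
  set q : ℂ := (Fintype.card F : ℂ)
  unfold binom jacobiS
  have h1 : χ (-1) * χ (-1) = 1 := by rw [← map_mul]; norm_num
  calc (χ (-1) / q * ∑ y : F, (C * χ ^ 2) y * χ⁻¹ (1 - y)) *
        ((D * χ) (-1) / q * ∑ z : F, (C * χ) z * (D * χ)⁻¹ (1 - z)) * χ (x / 4)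
      = ∑ y : F, ∑ z : F, (χ (-1) / q * ((C * χ ^ 2) y * χ⁻¹ (1 - y))) *
          ((D * χ) (-1) / q * ((C * χ) z * (D * χ)⁻¹ (1 - z))) * χ (x / 4) := by
        rw [Finset.mul_sum, Finset.mul_sum, Finset.sum_mul_sum, Finset.sum_mul]
        refine Finset.sum_congr rfl fun y _ => ?_
        rw [Finset.sum_mul]
    _ = _ := by
        refine Finset.sum_congr rfl fun y _ => Finset.sum_congr rfl fun z _ => ?_
        simp only [MulChar.mul_apply, sq, MulChar.inv_apply',
          mul_inv, map_mul, mc_inv, div_eq_mul_inv]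
        linear_combination (D (-1) * (q^2)⁻¹ * (C y * C z * (D (1-z))⁻¹) *
          (χ y * χ y * χ z * χ x * (χ 4)⁻¹ * (χ (1-y))⁻¹ * (χ (1-z))⁻¹)) * h1

lemma u_iff (x y z : F) (h4 : (4:F) ≠ 0) :
    y*y*z*(x/4)*(1-y)⁻¹*(1-z)⁻¹ = 1 ↔
      (y ≠ 1 ∧ z ≠ 1 ∧ x*y^2*z = 4*(1-y)*(1-z)) := by
  constructor
  · intro h
    have h1y : (1:F) - y ≠ 0 := by intro h0; rw [h0, inv_zero] at h; simp at h
    have h1z : (1:F) - z ≠ 0 := by intro h0; rw [h0, inv_zero] at h; simp at h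
    refine ⟨fun h' => h1y (by rw [h']; ring), fun h' => h1z (by rw [h']; ring), ?_⟩
    field_simp at h
    linear_combination h
  · rintro ⟨hy1, hz1, heq⟩
    have h1y : (1:F) - y ≠ 0 := sub_ne_zero.mpr fun h => hy1 h.symm
    have h1z : (1:F) - z ≠ 0 := sub_ne_zero.mpr fun h => hz1 h.symm
    field_simp
    linear_combination heq

lemma curve_sum [DecidableEq F] (C D : MulChar F ℂ) (x : F) (h2 : (2:F) ≠ 0)
    (h4 : (4:F) ≠ 0) (hx0 : x ≠ 0) :
    ∑ s ∈ univ.filter (fun s : F => s ≠ 1 ∧ 2 - 2*s - x ≠ 0 ∧ 1 - x - s^2 ≠ 0),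
        C 2 * ((C * D⁻¹ ^ 2) (1 - s) * (C⁻¹ * D) (1 - x - s^2))
    = ∑ yz ∈ (univ ×ˢ univ).filter
        (fun yz : F × F => yz.1 ≠ 1 ∧ yz.2 ≠ 1 ∧
          x * yz.1^2 * yz.2 = 4 * (1 - yz.1) * (1 - yz.2)),
        D (-1) * (C yz.1 * (C yz.2 * D⁻¹ (1 - yz.2))) := by
  refine Finset.sum_nbij'
    (fun s => (2*(1-s)/(2-2*s-x), (2-2*s-x)/(1-x-s^2)))
    (fun yz => 1 + x*yz.1/(2*(1-yz.1))) ?_ ?_ ?_ ?_ ?_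
  · -- i maps dom to curve
    intro s hs
    simp only [Finset.mem_filter, Finset.mem_univ, Finset.mem_product, true_and] at hs ⊢
    obtain ⟨hs1, hd, he⟩ := hs
    have h1s : (1:F) - s ≠ 0 := sub_ne_zero.mpr (fun h => hs1 h.symm)
    refine ⟨?_, ?_, ?_⟩
    · intro h
      rw [div_eq_iff hd, one_mul] at h
      exact hx0 (by linear_combination h)
    · intro h
      rw [div_eq_iff he, one_mul] at h
      exact h1s (by
        have : ((1:F)-s)^2 = 0 := by linear_combination h
        exact pow_eq_zero_iff two_ne_zero |>.mp this)
    · have hd' : (2:F)*(1-s) - x ≠ 0 := by convert hd using 1; ring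
      field_simp
      ring
  · -- j maps curve to dom
    rintro ⟨y, z⟩ hyz
    simp only [Finset.mem_filter, Finset.mem_univ, Finset.mem_product, true_and] at hyz ⊢
    obtain ⟨hy1, hz1, heq⟩ := hyz
    have h1y : (1:F) - y ≠ 0 := sub_ne_zero.mpr (fun h => hy1 h.symm)
    have h1z : (1:F) - z ≠ 0 := sub_ne_zero.mpr (fun h => hz1 h.symm)
    have hy0 : y ≠ 0 := by
      intro h
      apply h1z
      have h0 : (4:F) * (1 - z) = 0 := by rw [h] at heq; linear_combination -heq
      rcases mul_eq_zero.mp h0 with h'|h'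
      · exact absurd h' h4
      · exact h'
    have hz0 : z ≠ 0 := by
      intro h
      apply h1y
      have h0 : (4:F) * (1 - y) = 0 := by rw [h] at heq; linear_combination -heq
      rcases mul_eq_zero.mp h0 with h'|h'
      · exact absurd h' h4
      · exact h'
    have hΔ : x * y^2 + 4*(1-y) ≠ 0 := by
      intro h
      have h0 : (4:F) * (1 - y) = 0 := by linear_combination z * h - heq
      rcases mul_eq_zero.mp h0 with h'|h'
      · exact absurd h' h4
      · exact h1y h'
    have e1 : 2 - 2*(1 + x*y/(2*(1-y))) - x = -(x/(1-y)) := by field_simp; ring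
    have e2 : 1 - x - (1 + x*y/(2*(1-y)))^2
        = -(x*(x*y^2 + 4*(1-y))/(4*(1-y)^2)) := by field_simp; ring
    refine ⟨?_, ?_, ?_⟩
    · intro h
      have h0 : x*y/(2*(1-y)) = 0 := by linear_combination h
      exact (div_ne_zero (mul_ne_zero hx0 hy0) (mul_ne_zero h2 h1y)) h0
    · rw [e1]
      exact neg_ne_zero.mpr (div_ne_zero hx0 h1y)
    · rw [e2]
      refine neg_ne_zero.mpr (div_ne_zero (mul_ne_zero hx0 hΔ) ?_)
      exact mul_ne_zero h4 (pow_ne_zero 2 h1y)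
  · -- left inverse
    intro s hs
    simp only [Finset.mem_filter, Finset.mem_univ, true_and] at hs
    obtain ⟨hs1, hd, he⟩ := hs
    have hd' : (2:F)*(1-s) - x ≠ 0 := by convert hd using 1; ring
    have hy' : 1 - 2*(1-s)/(2-2*s-x) = -(x/(2-2*s-x)) := by field_simp; ring
    show 1 + x * (2*(1-s)/(2-2*s-x)) / (2 * (1 - 2*(1-s)/(2-2*s-x))) = s
    rw [hy']
    field_simp
    ring
  · -- right inverse
    rintro ⟨y, z⟩ hyz
    simp only [Finset.mem_filter, Finset.mem_univ, Finset.mem_product, true_and] at hyz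
    obtain ⟨hy1, hz1, heq⟩ := hyz
    have h1y : (1:F) - y ≠ 0 := sub_ne_zero.mpr (fun h => hy1 h.symm)
    have h1z : (1:F) - z ≠ 0 := sub_ne_zero.mpr (fun h => hz1 h.symm)
    have hy0 : y ≠ 0 := by
      intro h
      apply h1z
      have h0 : (4:F) * (1 - z) = 0 := by rw [h] at heq; linear_combination -heq
      rcases mul_eq_zero.mp h0 with h'|h'
      · exact absurd h' h4
      · exact h'
    have hΔ : x * y^2 + 4*(1-y) ≠ 0 := by
      intro h
      have h0 : (4:F) * (1 - y) = 0 := by linear_combination z * h - heq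
      rcases mul_eq_zero.mp h0 with h'|h'
      · exact absurd h' h4
      · exact h1y h'
    have e0 : 1 - (1 + x*y/(2*(1-y))) = -(x*y/(2*(1-y))) := by ring
    have e1 : 2 - 2*(1 + x*y/(2*(1-y))) - x = -(x/(1-y)) := by field_simp; ring
    have e2 : 1 - x - (1 + x*y/(2*(1-y)))^2
        = -(x*(x*y^2 + 4*(1-y))/(4*(1-y)^2)) := by field_simp; ring
    have hne2 : -(x*(x*y^2 + 4*(1-y))/(4*(1-y)^2)) ≠ 0 :=
      neg_ne_zero.mpr (div_ne_zero (mul_ne_zero hx0 hΔ)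
        (mul_ne_zero h4 (pow_ne_zero 2 h1y)))
    show ((2*(1-(1 + x*y/(2*(1-y))))/(2-2*(1 + x*y/(2*(1-y)))-x),
        (2-2*(1 + x*y/(2*(1-y)))-x)/(1-x-(1 + x*y/(2*(1-y)))^2)) : F × F) = (y, z)
    rw [e0, e1, e2, Prod.mk.injEq]
    constructor
    · field_simp
    · rw [div_eq_iff hne2]
      field_simp
      linear_combination heq

  · -- summand equality
    intro s hs
    simp only [Finset.mem_filter, Finset.mem_univ, Finset.mem_product, true_and] at hs
    obtain ⟨hs1, hd, he⟩ := hs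
    have h1s : (1:F) - s ≠ 0 := sub_ne_zero.mpr (fun h => hs1 h.symm)
    show C 2 * ((C * D⁻¹ ^ 2) (1 - s) * (C⁻¹ * D) (1 - x - s^2))
        = D (-1) * (C (2*(1-s)/(2-2*s-x)) *
            (C ((2-2*s-x)/(1-x-s^2)) * D⁻¹ (1 - (2-2*s-x)/(1-x-s^2))))
    have hz' : 1 - (2-2*s-x)/(1-x-s^2) = (-1) * (1-s) * (1-s) * (1-x-s^2)⁻¹ := by
      field_simp
      ring
    have ha1 : 2*(1-s)/(2-2*s-x) = 2 * (1-s) * (2-2*s-x)⁻¹ := by rw [div_eq_mul_inv]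
    have ha2 : (2-2*s-x)/(1-x-s^2) = (2-2*s-x) * (1-x-s^2)⁻¹ := by rw [div_eq_mul_inv]
    rw [hz', ha1, ha2]
    simp only [MulChar.mul_apply, sq, MulChar.inv_apply', map_mul, mc_inv]
    have hCd : C (2-2*s-x) ≠ 0 := mc_ne C hd
    have hCe : C (1-x-s^2) ≠ 0 := mc_ne C he
    have hDe : D (1-x-s^2) ≠ 0 := mc_ne D he
    have hD1 : D (1-s) ≠ 0 := mc_ne D h1s
    have hDm : D (-1) ≠ 0 := mc_ne D (by norm_num)
    have hrel := mc_neg_one D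
    have hc1 : C (2-2*s-x) * (C (2-2*s-x))⁻¹ = 1 := mul_inv_cancel₀ hCd
    have hc2 : D (-1) * (D (-1))⁻¹ = 1 := mul_inv_cancel₀ hDm
    field_simp
    have hCd' : C ((1 - s) * 2 - x) ≠ 0 := mc_ne C (by convert hd using 1; ring)
    rw [mul_div_assoc, div_self hCd', mul_one]

lemma extra_term (C D : MulChar F ℂ) (x : F) (h2 : (2:F) ≠ 0) (h4 : (4:F) ≠ 0)
    (hx0 : x ≠ 0) :
    (C * D) (-1) * C⁻¹ (x / 4) =
      C 2 * ((C * D⁻¹ ^ 2) (1 - (1 - x/2)) * (C⁻¹ * D) (1 - x - (1 - x/2)^2)) := by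
  have e1 : (1:F) - (1 - x/2) = x * 2⁻¹ := by ring
  have e2 : (1:F) - x - (1 - x/2)^2 = (-1) * (x*x) * 4⁻¹ := by field_simp; ring
  have e3 : x / 4 = x * 4⁻¹ := by rw [div_eq_mul_inv]
  have e4 : (4:F) = 2 * 2 := by norm_num
  rw [e1, e2, e3, e4]
  simp only [MulChar.mul_apply, sq, MulChar.inv_apply', map_mul, mc_inv]
  have hC2 : C 2 ≠ 0 := mc_ne C h2
  have hD2 : D 2 ≠ 0 := mc_ne D h2
  have hCx : C x ≠ 0 := mc_ne C hx0
  have hDx : D x ≠ 0 := mc_ne D hx0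
  have hCm : C (-1) ≠ 0 := mc_ne C (by norm_num)
  have hDm : D (-1) ≠ 0 := mc_ne D (by norm_num)
  have hrel : C (-1) * C (-1) = 1 := mc_neg_one C
  have ha : C x * (C x)⁻¹ = 1 := mul_inv_cancel₀ hCx
  have hb : D x * (D x)⁻¹ = 1 := mul_inv_cancel₀ hDx
  have hcc : C 2 * (C 2)⁻¹ = 1 := mul_inv_cancel₀ hC2
  have hdd : D 2 * (D 2)⁻¹ = 1 := mul_inv_cancel₀ hD2
  have hmm : C (-1) * (C (-1))⁻¹ = 1 := mul_inv_cancel₀ hCm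
  field_simp
  linear_combination hrel

/-- for `C ≠ D` and `x ∉ {0,1}`,
`F*(C,D;x) = (C(2)/q) Σ_t CD̄²(1-t) C̄D(1-x-t²)`. -/
theorem Fstar_alt (p : ℕ) [Fact p.Prime] [CharP F p] (hp : p ≠ 2)
    (C D : MulChar F ℂ) (hCD : C ≠ D) (x : F) (hx0 : x ≠ 0) (hx1 : x ≠ 1) :
    Fstar C D x =
      C (2 : F) / (Fintype.card F : ℂ) *
        ∑ t : F, (C * D⁻¹ ^ 2) (1 - t) * (C⁻¹ * D) (1 - x - t ^ 2) := by
  classical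
  letI instF : Fintype (MulChar F ℂ) := Fintype.ofFinite _
  set q : ℂ := (Fintype.card F : ℂ) with hqdef
  have h2 : (2:F) ≠ 0 := by
    intro h
    have h2' : ((2:ℕ):F) = 0 := by exact_mod_cast h
    have hdvd := (CharP.cast_eq_zero_iff F p 2).mp h2'
    exact hp ((Nat.prime_dvd_prime_iff_eq Fact.out Nat.prime_two).mp hdvd)
  have h4 : (4:F) ≠ 0 := by
    have h44 : (4:F) = 2*2 := by norm_num
    rw [h44]; exact mul_ne_zero h2 h2
  have hq0 : q ≠ 0 := Nat.cast_ne_zero.mpr Fintype.card_ne_zero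
  have hq1 : q - 1 ≠ 0 := by
    intro h
    have h1 : ((Fintype.card F : ℕ) : ℂ) = 1 := by rw [← hqdef]; linear_combination h
    have : Fintype.card F = 1 := by exact_mod_cast h1
    exact (Fintype.one_lt_card (α := F)).ne' this
  -- Step 1: character-sum reduction
  have hM : (∑ χ : MulChar F ℂ, binom (C * χ ^ 2) χ * binom (C * χ) (D * χ) * χ (x / 4))
      = ∑ y : F, ∑ z : F, (D (-1) / q ^ 2 * (C y * C z * D⁻¹ (1 - z))) *
          (if y * y * z * (x/4) * (1-y)⁻¹ * (1-z)⁻¹ = 1 then q - 1 else 0) := by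
    rw [Finset.sum_congr rfl fun χ _ => binom_term C D χ x, Finset.sum_comm]
    refine Finset.sum_congr rfl fun y _ => ?_
    rw [Finset.sum_comm]
    refine Finset.sum_congr rfl fun z _ => ?_
    rw [← Finset.mul_sum, sum_mulChar]
  -- pointwise transformation
  have hpt : ∀ y z : F, q / (q-1) * ((D (-1) / q ^ 2 * (C y * C z * D⁻¹ (1 - z))) *
        (if y * y * z * (x/4) * (1-y)⁻¹ * (1-z)⁻¹ = 1 then q - 1 else 0))
      = if (y ≠ 1 ∧ z ≠ 1 ∧ x * y^2 * z = 4 * (1 - y) * (1 - z)) then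
          q⁻¹ * (D (-1) * (C y * (C z * D⁻¹ (1 - z)))) else 0 := by
    intro y z
    rw [if_congr (u_iff x y z h4) rfl rfl]
    split_ifs with h
    · field_simp
    · ring
  -- Step 2: rewrite the main term as a sum over the curve
  have hmain : q / (q - 1) *
        (∑ y : F, ∑ z : F, (D (-1) / q ^ 2 * (C y * C z * D⁻¹ (1 - z))) *
          (if y * y * z * (x/4) * (1-y)⁻¹ * (1-z)⁻¹ = 1 then q - 1 else 0))
      = q⁻¹ * ∑ yz ∈ (univ ×ˢ univ).filter
          (fun yz : F × F => yz.1 ≠ 1 ∧ yz.2 ≠ 1 ∧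
            x * yz.1^2 * yz.2 = 4 * (1 - yz.1) * (1 - yz.2)),
          D (-1) * (C yz.1 * (C yz.2 * D⁻¹ (1 - yz.2))) := by
    calc q / (q - 1) * ∑ y : F, ∑ z : F, (D (-1) / q ^ 2 * (C y * C z * D⁻¹ (1 - z))) *
          (if y * y * z * (x/4) * (1-y)⁻¹ * (1-z)⁻¹ = 1 then q - 1 else 0)
        = ∑ y : F, ∑ z : F, q / (q-1) * ((D (-1) / q ^ 2 * (C y * C z * D⁻¹ (1 - z))) *
            (if y * y * z * (x/4) * (1-y)⁻¹ * (1-z)⁻¹ = 1 then q - 1 else 0)) := by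
          rw [Finset.mul_sum]
          exact Finset.sum_congr rfl fun y _ => by rw [Finset.mul_sum]
      _ = ∑ y : F, ∑ z : F, if (y ≠ 1 ∧ z ≠ 1 ∧ x * y^2 * z = 4 * (1 - y) * (1 - z)) then
            q⁻¹ * (D (-1) * (C y * (C z * D⁻¹ (1 - z)))) else 0 :=
          Finset.sum_congr rfl fun y _ => Finset.sum_congr rfl fun z _ => hpt y z
      _ = ∑ yz ∈ (univ ×ˢ univ : Finset (F × F)),
            if (yz.1 ≠ 1 ∧ yz.2 ≠ 1 ∧ x * yz.1^2 * yz.2 = 4 * (1 - yz.1) * (1 - yz.2)) then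
              q⁻¹ * (D (-1) * (C yz.1 * (C yz.2 * D⁻¹ (1 - yz.2)))) else 0 := by
          rw [Finset.sum_product]
      _ = _ := by
          rw [← Finset.sum_filter, Finset.mul_sum]
  -- Step 3: split the target sum
  have hsplit : (∑ t : F, (C * D⁻¹ ^ 2) (1 - t) * (C⁻¹ * D) (1 - x - t ^ 2))
      = (∑ s ∈ univ.filter (fun s : F => s ≠ 1 ∧ 2 - 2*s - x ≠ 0 ∧ 1 - x - s^2 ≠ 0),
          (C * D⁻¹ ^ 2) (1 - s) * (C⁻¹ * D) (1 - x - s^2))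
        + (C * D⁻¹ ^ 2) (1 - (1 - x/2)) * (C⁻¹ * D) (1 - x - (1 - x/2)^2) := by
    have hx22 : x / 2 * 2 = x := div_mul_cancel₀ x h2
    have hsub : (∑ s ∈ univ.filter (fun s : F => s ≠ 1 ∧ 2 - 2*s - x ≠ 0 ∧ 1 - x - s^2 ≠ 0),
          (C * D⁻¹ ^ 2) (1 - s) * (C⁻¹ * D) (1 - x - s^2))
        = ∑ s ∈ univ.erase (1 - x/2), (C * D⁻¹ ^ 2) (1 - s) * (C⁻¹ * D) (1 - x - s^2) := by
      refine Finset.sum_subset ?_ ?_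
      · intro s hs
        simp only [Finset.mem_filter, Finset.mem_univ, true_and] at hs
        refine Finset.mem_erase.mpr ⟨?_, Finset.mem_univ s⟩
        intro h
        apply hs.2.1
        rw [h]
        linear_combination hx22
      · intro s hs hns
        simp only [Finset.mem_filter, Finset.mem_univ, true_and, not_and_or, not_not] at hns
        have hs' : s ≠ 1 - x/2 := (Finset.mem_erase.mp hs).1
        rcases hns with h1 | h | h
        · rw [show (1:F) - s = 0 by rw [h1]; ring, MulChar.map_zero, zero_mul]
        · exfalso
          apply hs'
          refine mul_left_cancel₀ h2 ?_
          linear_combination -h + hx22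
        · rw [h, MulChar.map_zero, mul_zero]
    rw [← Finset.sum_erase_add univ _ (Finset.mem_univ (1 - x/2)), ← hsub]
  -- Assemble
  have hF : Fstar C D x = q / (q - 1) *
      (∑ χ : MulChar F ℂ, binom (C * χ ^ 2) χ * binom (C * χ) (D * χ) * χ (x / 4))
      + (C * D) (-1) * C⁻¹ (x / 4) / q := rfl
  rw [hF, hM, hmain, ← curve_sum C D x h2 h4 hx0, extra_term C D x h2 h4 hx0, hsplit,
    ← Finset.mul_sum]
  ring
end

section
/- With A, A²B̄, φAB̄ nontrivial and y ∉ {0,1}, the sums α := G(A²B̄)·G(φĀB)·Σ_t Ā²B(1-t)·φAB̄(y-t²) and β := φBA(-1)·A²B̄(2)·G(φ)·G(A)·Σ_t A²B̄(1-t)·Ā(1-y-t²) are equal. -/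
open Complex Finset

variable {F : Type*} [Field F] [Fintype F]

noncomputable def psiChar (p : ℕ) [Fact p.Prime] [CharP F p] : AddChar F ℂ :=
  letI := ZMod.algebra F p
  (ZMod.stdAddChar (N := p)).compAddMonoidHom (Algebra.trace (ZMod p) F).toAddMonoidHom

lemma psiChar_apply (p : ℕ) [Fact p.Prime] [CharP F p] (x : F) :
    psiChar (F := F) p x = zetaChar p x := by
  letI := ZMod.algebra F p
  have h := ZMod.stdAddChar_coe (N := p) ((Algebra.trace (ZMod p) F x).val : ℤ)
  have hcast : (((((Algebra.trace (ZMod p) F x).val : ℕ) : ℤ)) : ZMod p)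
      = Algebra.trace (ZMod p) F x := by
    push_cast
    simp [ZMod.natCast_val, ZMod.cast_id]
  rw [hcast] at h
  show ZMod.stdAddChar (Algebra.trace (ZMod p) F x) = _
  rw [h, zetaChar]
  push_cast
  ring_nf

lemma psiChar_ne_one (p : ℕ) [Fact p.Prime] [CharP F p] : psiChar (F := F) p ≠ 1 := by
  obtain rfl : p = ringChar F := (ringChar.eq F p).symm
  letI := ZMod.algebra F (ringChar F)
  intro h
  obtain ⟨b, hb⟩ := FiniteField.trace_to_zmod_nondegenerate F (one_ne_zero (α := F))
  rw [one_mul] at hb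
  apply hb
  have hb1 : psiChar (F := F) (ringChar F) b = 1 := by rw [h]; rfl
  have h2 : ZMod.stdAddChar (Algebra.trace (ZMod (ringChar F)) F b)
      = ZMod.stdAddChar (0 : ZMod (ringChar F)) := by
    rw [AddChar.map_zero_eq_one]
    exact hb1
  exact ZMod.injective_stdAddChar h2

lemma sum_addChar_mul {ψ : AddChar F ℂ} (hψ : ψ ≠ 1) {a : F} (ha : a ≠ 0) :
    ∑ x : F, ψ (a * x) = 0 := by
  classical
  have h := AddChar.sum_mulShift (ψ := ψ) a (AddChar.IsPrimitive.of_ne_one hψ)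
  rw [if_neg ha] at h
  have h2 : ∑ x : F, ψ (x * a) = 0 := by exact_mod_cast h
  rw [← h2]
  exact Finset.sum_congr rfl fun x _ => by rw [mul_comm]

lemma sum_mulChar_mul {ψ : AddChar F ℂ} (hψ : ψ ≠ 1) {χ : MulChar F ℂ} (hχ : χ ≠ 1) (x : F) :
    ∑ u : F, χ u * ψ (u * x) = χ⁻¹ x * ∑ u : F, χ u * ψ u := by
  by_cases hx : x = 0
  · subst hx
    simp only [mul_zero, AddChar.map_zero_eq_one, mul_one]
    rw [MulChar.sum_eq_zero_of_ne_one hχ, MulChar.map_nonunit _ not_isUnit_zero, zero_mul]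
  · rw [MulChar.inv_apply' , Finset.mul_sum]
    refine Fintype.sum_equiv (Equiv.mulRight₀ x hx) _ _ fun u => ?_
    have hux : x⁻¹ * (u * x) = u := by field_simp
    show χ u * ψ (u * x) = χ x⁻¹ * (χ (u * x) * ψ (u * x))
    rw [← mul_assoc, ← map_mul, hux]

section quad

variable {φ : MulChar F ℂ}

lemma phi_unit_sq (hφ2 : φ * φ = 1) {u : F} (hu : u ≠ 0) : φ u * φ u = 1 := by
  rw [← MulChar.mul_apply, hφ2, MulChar.one_apply (isUnit_iff_ne_zero.mpr hu)]

lemma phi_isSquare (hφ2 : φ * φ = 1) {x : F} (hx : x ≠ 0) (h : IsSquare x) : φ x = 1 := by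
  obtain ⟨r, rfl⟩ := h
  have hr : r ≠ 0 := fun h0 => hx (by rw [h0, mul_zero])
  rw [map_mul]
  exact phi_unit_sq hφ2 hr

lemma phi_nonsquare (hφ : φ ≠ 1) (hφ2 : φ * φ = 1) {x : F} (hx : x ≠ 0)
    (h : ¬ IsSquare x) : φ x = -1 := by
  classical
  rcases mul_self_eq_one_iff.mp (phi_unit_sq hφ2 hx) with h1 | h1
  · exfalso
    apply hφ
    apply MulChar.ext
    intro a
    rw [MulChar.one_apply_coe]
    by_cases hs : IsSquare (a : F)
    · exact phi_isSquare hφ2 a.ne_zero hs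
    · have hax : ((a : F) * x) ≠ 0 := mul_ne_zero a.ne_zero hx
      have hmul : IsSquare ((a : F) * x) := by
        refine (quadraticChar_one_iff_isSquare hax).mp ?_
        rw [map_mul, quadraticChar_neg_one_iff_not_isSquare.mpr hs,
          quadraticChar_neg_one_iff_not_isSquare.mpr h]
        ring
      have h2 := phi_isSquare hφ2 hax hmul
      rw [map_mul, h1, mul_one] at h2
      exact h2
  · exact h1

lemma card_sq (hφ : φ ≠ 1) (hφ2 : φ * φ = 1) (h2F : (2 : F) ≠ 0) [DecidableEq F] (x : F) :
    (((univ.filter (fun t : F => t ^ 2 = x)).card : ℕ) : ℂ) = 1 + φ x := by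
  by_cases hx : x = 0
  · subst hx
    have hfil : univ.filter (fun t : F => t ^ 2 = 0) = {0} := by
      ext t
      simp [pow_eq_zero_iff]
    rw [hfil, card_singleton, MulChar.map_nonunit _ not_isUnit_zero]
    norm_num
  by_cases hs : IsSquare x
  · obtain ⟨r, rfl⟩ := hs
    have hr : r ≠ 0 := fun h0 => hx (by rw [h0, mul_zero])
    have hrne : r ≠ -r := by
      intro hrr
      apply hr
      have : (2 : F) * r = 0 := by linear_combination hrr
      exact (mul_eq_zero.mp this).resolve_left h2F
    have hfil : univ.filter (fun t : F => t ^ 2 = r * r) = {r, -r} := by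
      ext t
      simp only [mem_filter, mem_univ, true_and, mem_insert, mem_singleton]
      constructor
      · intro h
        have hz : (t - r) * (t + r) = 0 := by linear_combination h
        rcases mul_eq_zero.mp hz with h' | h'
        · exact Or.inl (sub_eq_zero.mp h')
        · exact Or.inr (eq_neg_of_add_eq_zero_left h')
      · rintro (rfl | rfl) <;> ring
    rw [hfil, card_insert_of_notMem (by simpa using hrne), card_singleton,
      phi_isSquare hφ2 hx ⟨r, rfl⟩]
    norm_num
  · have hfil : univ.filter (fun t : F => t ^ 2 = x) = ∅ := by
      ext t
      simp only [mem_filter, mem_univ, true_and, notMem_empty, iff_false]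
      intro h
      exact hs ⟨t, by rw [← h]; ring⟩
    rw [hfil, phi_nonsquare hφ hφ2 hx hs]
    norm_num

lemma sum_psi_sq {ψ : AddChar F ℂ} (hψ : ψ ≠ 1) (hφ : φ ≠ 1) (hφ2 : φ * φ = 1)
    (h2F : (2 : F) ≠ 0) {a : F} (ha : a ≠ 0) :
    ∑ t : F, ψ (a * t ^ 2) = φ a * ∑ u : F, φ u * ψ u := by
  classical
  have h1 : ∑ t : F, ψ (a * t ^ 2)
      = ∑ x : F, (((univ.filter (fun t : F => t ^ 2 = x)).card : ℕ) : ℂ) * ψ (a * x) := by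
    rw [← Finset.sum_fiberwise' univ (fun t : F => t ^ 2) (fun x => ψ (a * x))]
    exact Finset.sum_congr rfl fun x _ => by rw [Finset.sum_const, nsmul_eq_mul]
  rw [h1]
  have h2 : ∀ x : F, (((univ.filter (fun t : F => t ^ 2 = x)).card : ℕ) : ℂ) * ψ (a * x)
      = ψ (a * x) + φ x * ψ (a * x) := by
    intro x
    rw [card_sq hφ hφ2 h2F x]
    ring
  rw [Finset.sum_congr rfl fun x _ => h2 x, Finset.sum_add_distrib,
    sum_addChar_mul hψ ha, zero_add]
  have hφinv : φ⁻¹ = φ := inv_eq_of_mul_eq_one_right hφ2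
  have h3 : ∀ x : F, φ x * ψ (a * x) = φ x * ψ (x * a) := fun x => by rw [mul_comm a x]
  rw [Finset.sum_congr rfl fun x _ => h3 x, sum_mulChar_mul hψ hφ a, hφinv]

end quad

lemma mulChar_ne_zero (χ : MulChar F ℂ) {u : F} (hu : u ≠ 0) : χ u ≠ 0 := by
  have h : χ u * χ⁻¹ u = 1 := by
    rw [← MulChar.mul_apply, mul_inv_cancel, MulChar.one_apply (isUnit_iff_ne_zero.mpr hu)]
  exact left_ne_zero_of_mul_eq_one h


/-- equality of the two sums `α` and `β` from the proof of Lemma 1. -/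
theorem alpha_eq_beta (p : ℕ) [Fact p.Prime] [CharP F p] (hp : p ≠ 2)
    (φ : MulChar F ℂ) (hφ : φ ≠ 1) (hφ2 : φ * φ = 1)
    (A B : MulChar F ℂ) (hA : A ≠ 1) (hA2B : A ^ 2 * B⁻¹ ≠ 1) (hφAB : φ * A * B⁻¹ ≠ 1)
    (y : F) (hy0 : y ≠ 0) (hy1 : y ≠ 1) :
    gaussS p (A ^ 2 * B⁻¹) * gaussS p (φ * A⁻¹ * B) *
        ∑ t : F, (A⁻¹ ^ 2 * B) (1 - t) * (φ * A * B⁻¹) (y - t ^ 2) =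
      (φ * B * A) (-1) * (A ^ 2 * B⁻¹) (2 : F) * gaussS p φ * gaussS p A *
        ∑ t : F, (A ^ 2 * B⁻¹) (1 - t) * A⁻¹ (1 - y - t ^ 2) := by
  classical
  have hψne : psiChar (F := F) p ≠ 1 := psiChar_ne_one p
  set ψ : AddChar F ℂ := psiChar p with hψdef
  have hψ : ψ ≠ 1 := hψne
  set χ₁ : MulChar F ℂ := A ^ 2 * B⁻¹ with hχ₁def
  set χ₂ : MulChar F ℂ := φ * A⁻¹ * B with hχ₂def
  have h2F : (2 : F) ≠ 0 := by
    intro h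
    have h2 : ((2 : ℕ) : F) = 0 := by exact_mod_cast h
    have hdvd : p ∣ 2 := (CharP.cast_eq_zero_iff F p 2).mp h2
    exact hp ((Nat.prime_dvd_prime_iff_eq (Fact.out) Nat.prime_two).mp hdvd)
  have hφinv : φ⁻¹ = φ := inv_eq_of_mul_eq_one_right hφ2
  have hinv1 : χ₁⁻¹ = A⁻¹ ^ 2 * B := by rw [hχ₁def, mul_inv, inv_inv, inv_pow]
  have hinv2 : χ₂⁻¹ = φ * A * B⁻¹ := by rw [hχ₂def, mul_inv, mul_inv, inv_inv, hφinv]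
  have hχ₁ : χ₁ ≠ 1 := hA2B
  have hχ₂ : χ₂ ≠ 1 := fun h => hφAB (by rw [← hinv2, h, inv_one])
  have hgauss : ∀ χ : MulChar F ℂ, gaussS p χ = ∑ u : F, χ u * ψ u := fun χ =>
    Finset.sum_congr rfl fun u _ => by rw [hψdef, psiChar_apply]
  have hχ₁app : ∀ z : F, χ₁ z = A z ^ 2 * (B z)⁻¹ := fun z => by
    rw [hχ₁def, MulChar.mul_apply, MulChar.pow_apply' A (by norm_num : (2:ℕ) ≠ 0),
      MulChar.inv_apply_eq_inv']
  have hχ₂app : ∀ z : F, χ₂ z = φ z * (A z)⁻¹ * B z := fun z => by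
    rw [hχ₂def, MulChar.mul_apply, MulChar.mul_apply, MulChar.inv_apply_eq_inv']
  simp only [hgauss]
  rw [← hinv1, ← hinv2]
  -- key2 : inner t-sum
  have key2 : ∀ u v : F,
      (∑ t : F, χ₁ v * ψ (v * (1 - t)) * (χ₂ u * ψ (u * (y - t ^ 2))))
        = χ₁ v * χ₂ u * φ (-u) * (∑ w : F, φ w * ψ w) * ψ (v + u * y + v ^ 2 / (4 * u)) := by
    intro u v
    by_cases hu : u = 0
    · subst hu
      simp only [MulChar.map_nonunit χ₂ not_isUnit_zero]
      simp
    · have hu2 : (2 : F) * u ≠ 0 := mul_ne_zero h2F hu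
      have h4F : (4 : F) ≠ 0 := by
        have : (4 : F) = 2 * 2 := by norm_num
        rw [this]; exact mul_ne_zero h2F h2F
      have harg : ∀ t : F, v * (1 - t) + u * (y - t ^ 2)
          = (v + u * y + v ^ 2 / (4 * u)) + (-u) * (t + v / (2 * u)) ^ 2 := by
        intro t
        field_simp
        ring
      have hsub : ∑ t : F, ψ ((-u) * (t + v / (2 * u)) ^ 2) = ∑ t : F, ψ ((-u) * t ^ 2) :=
        Fintype.sum_equiv (Equiv.addRight (v / (2 * u))) _ _ fun t => rfl
      calc ∑ t : F, χ₁ v * ψ (v * (1 - t)) * (χ₂ u * ψ (u * (y - t ^ 2)))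
          = χ₁ v * χ₂ u * ∑ t : F, ψ (v * (1 - t) + u * (y - t ^ 2)) := by
            rw [Finset.mul_sum]
            exact Finset.sum_congr rfl fun t _ => by rw [AddChar.map_add_eq_mul]; ring
        _ = χ₁ v * χ₂ u * ∑ t : F,
              ψ (v + u * y + v ^ 2 / (4 * u)) * ψ ((-u) * (t + v / (2 * u)) ^ 2) := by
            congr 1
            exact Finset.sum_congr rfl fun t _ => by rw [harg t, AddChar.map_add_eq_mul]
        _ = χ₁ v * χ₂ u * (ψ (v + u * y + v ^ 2 / (4 * u)) *
              ∑ t : F, ψ ((-u) * (t + v / (2 * u)) ^ 2)) := by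
            rw [← Finset.mul_sum]
        _ = χ₁ v * χ₂ u * (ψ (v + u * y + v ^ 2 / (4 * u)) *
              (φ (-u) * ∑ w : F, φ w * ψ w)) := by
            rw [hsub, sum_psi_sq hψ hφ hφ2 h2F (neg_ne_zero.mpr hu)]
        _ = χ₁ v * χ₂ u * φ (-u) * (∑ w : F, φ w * ψ w) *
              ψ (v + u * y + v ^ 2 / (4 * u)) := by ring
  -- key3 : v-sum reindexing
  have key3 : ∀ u : F,
      (∑ v : F, χ₁ v * χ₂ u * φ (-u) * (∑ w : F, φ w * ψ w) *
          ψ (v + u * y + v ^ 2 / (4 * u)))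
        = ∑ m : F, (∑ w : F, φ w * ψ w) *
            (φ (-1) * (χ₁ 2 * (A u * (χ₁ m * ψ (u * (m ^ 2 + 2 * m + y)))))) := by
    intro u
    by_cases hu : u = 0
    · subst hu
      simp only [MulChar.map_nonunit χ₂ not_isUnit_zero, MulChar.map_nonunit A not_isUnit_zero]
      simp
    · have hu2 : (2 : F) * u ≠ 0 := mul_ne_zero h2F hu
      have h4F : (4 : F) ≠ 0 := by
        have : (4 : F) = 2 * 2 := by norm_num
        rw [this]; exact mul_ne_zero h2F h2F
      have hAu : A u ≠ 0 := mulChar_ne_zero A hu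
      have hBu : B u ≠ 0 := mulChar_ne_zero B hu
      have hφu : φ u * φ u = 1 := phi_unit_sq hφ2 hu
      refine (Fintype.sum_equiv (Equiv.mulLeft₀ ((2 : F) * u) hu2) _ _ fun m => ?_).symm
      simp only [Equiv.mulLeft₀_apply]
      have hargv : (2 : F) * u * m + u * y + ((2 : F) * u * m) ^ 2 / (4 * u)
          = u * (m ^ 2 + 2 * m + y) := by
        field_simp
        ring
      rw [hargv, map_mul χ₁, map_mul χ₁, hχ₁app u, hχ₂app u,
        show (-u : F) = -1 * u by ring, map_mul φ]
      have hkey : A u ^ 2 * (B u)⁻¹ * (φ u * (A u)⁻¹ * B u) * (φ (-1) * φ u)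
          = φ (-1) * A u := by
        field_simp
        linear_combination φ (-1) * hφu
      linear_combination (-(χ₁ 2 * χ₁ m * (∑ w : F, φ w * ψ w) *
        ψ (u * (m ^ 2 + 2 * m + y)))) * hkey
  -- step5 : m reindexing
  have step5 : ∑ m : F, χ₁ m * A⁻¹ (m ^ 2 + 2 * m + y)
      = χ₁ (-1) * A⁻¹ (-1) * ∑ t : F, χ₁ (1 - t) * A⁻¹ (1 - y - t ^ 2) := by
    rw [Finset.mul_sum]
    refine (Fintype.sum_equiv (Equiv.subRight (1 : F)) _ _ fun t => ?_).symm
    simp only [Equiv.subRight_apply]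
    have e1 : χ₁ (t - 1) = χ₁ (-1) * χ₁ (1 - t) := by
      rw [← map_mul]; congr 1; ring
    have e2 : A⁻¹ ((t - 1) ^ 2 + 2 * (t - 1) + y) = A⁻¹ (-1) * A⁻¹ (1 - y - t ^ 2) := by
      rw [← map_mul]; congr 1; ring
    rw [e1, e2]
    ring
  -- constants
  have hB1 : B (-1) * B (-1) = 1 := by
    rw [← map_mul, show ((-1 : F) * (-1)) = 1 by norm_num, map_one]
  have hA1 : A (-1) ≠ 0 := mulChar_ne_zero A (by norm_num)
  have hB1' : B (-1) ≠ 0 := mulChar_ne_zero B (by norm_num)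
  have hconst : φ (-1) * (χ₁ (-1) * A⁻¹ (-1)) = (φ * B * A) (-1) := by
    rw [hχ₁app (-1), MulChar.inv_apply_eq_inv' A, MulChar.mul_apply, MulChar.mul_apply]
    field_simp
    linear_combination (-(φ (-1))) * hB1
  -- assemble
  calc (∑ u : F, χ₁ u * ψ u) * (∑ u : F, χ₂ u * ψ u) *
        ∑ t : F, χ₁⁻¹ (1 - t) * χ₂⁻¹ (y - t ^ 2)
      = ∑ t : F, ∑ v : F, ∑ u : F,
          χ₁ v * ψ (v * (1 - t)) * (χ₂ u * ψ (u * (y - t ^ 2))) := by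
        rw [Finset.mul_sum]
        refine Finset.sum_congr rfl fun t _ => ?_
        calc (∑ u : F, χ₁ u * ψ u) * (∑ u : F, χ₂ u * ψ u) *
              (χ₁⁻¹ (1 - t) * χ₂⁻¹ (y - t ^ 2))
            = (χ₁⁻¹ (1 - t) * ∑ u : F, χ₁ u * ψ u) *
              (χ₂⁻¹ (y - t ^ 2) * ∑ u : F, χ₂ u * ψ u) := by ring
          _ = (∑ v : F, χ₁ v * ψ (v * (1 - t))) *
              (∑ u : F, χ₂ u * ψ (u * (y - t ^ 2))) := by
              rw [sum_mulChar_mul hψ hχ₁ (1 - t), sum_mulChar_mul hψ hχ₂ (y - t ^ 2)]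
          _ = ∑ v : F, ∑ u : F, χ₁ v * ψ (v * (1 - t)) * (χ₂ u * ψ (u * (y - t ^ 2))) :=
              Fintype.sum_mul_sum _ _
    _ = ∑ v : F, ∑ t : F, ∑ u : F,
          χ₁ v * ψ (v * (1 - t)) * (χ₂ u * ψ (u * (y - t ^ 2))) := Finset.sum_comm
    _ = ∑ v : F, ∑ u : F, ∑ t : F,
          χ₁ v * ψ (v * (1 - t)) * (χ₂ u * ψ (u * (y - t ^ 2))) :=
        Finset.sum_congr rfl fun v _ => Finset.sum_comm
    _ = ∑ u : F, ∑ v : F, ∑ t : F,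
          χ₁ v * ψ (v * (1 - t)) * (χ₂ u * ψ (u * (y - t ^ 2))) := Finset.sum_comm
    _ = ∑ u : F, ∑ v : F, χ₁ v * χ₂ u * φ (-u) * (∑ w : F, φ w * ψ w) *
          ψ (v + u * y + v ^ 2 / (4 * u)) :=
        Finset.sum_congr rfl fun u _ => Finset.sum_congr rfl fun v _ => key2 u v
    _ = ∑ u : F, ∑ m : F, (∑ w : F, φ w * ψ w) *
          (φ (-1) * (χ₁ 2 * (A u * (χ₁ m * ψ (u * (m ^ 2 + 2 * m + y)))))) :=
        Finset.sum_congr rfl fun u _ => key3 u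
    _ = ∑ m : F, ∑ u : F, (∑ w : F, φ w * ψ w) *
          (φ (-1) * (χ₁ 2 * (A u * (χ₁ m * ψ (u * (m ^ 2 + 2 * m + y)))))) := Finset.sum_comm
    _ = ∑ m : F, (∑ w : F, φ w * ψ w) * (φ (-1) * χ₁ 2) * χ₁ m *
          (A⁻¹ (m ^ 2 + 2 * m + y) * ∑ w : F, A w * ψ w) := by
        refine Finset.sum_congr rfl fun m _ => ?_
        rw [← sum_mulChar_mul hψ hA (m ^ 2 + 2 * m + y), Finset.mul_sum]
        exact Finset.sum_congr rfl fun u _ => by ring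
    _ = (∑ w : F, φ w * ψ w) * (∑ w : F, A w * ψ w) * (φ (-1) * χ₁ 2) *
          ∑ m : F, χ₁ m * A⁻¹ (m ^ 2 + 2 * m + y) := by
        rw [Finset.mul_sum]
        exact Finset.sum_congr rfl fun m _ => by ring
    _ = (∑ w : F, φ w * ψ w) * (∑ w : F, A w * ψ w) * (φ (-1) * χ₁ 2) *
          (χ₁ (-1) * A⁻¹ (-1) * ∑ t : F, χ₁ (1 - t) * A⁻¹ (1 - y - t ^ 2)) := by
        rw [step5]
    _ = (φ * B * A) (-1) * χ₁ 2 * (∑ u : F, φ u * ψ u) * (∑ u : F, A u * ψ u) *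
          ∑ t : F, χ₁ (1 - t) * A⁻¹ (1 - y - t ^ 2) := by
        rw [← hconst]
        ring
end

section
/- (Inversion transformation) For multiplicative characters A, B, C on F_q and x ∈ F_q^*, one has ₂F₁(A,B;C;x) = ABC(-1)·B̄(x)·₂F₁(BC̄, B; BĀ; 1/x). -/
open Complex Finset

variable {F : Type*} [Field F] [Fintype F]

/-- inversion: for `x ≠ 0`,
`₂F₁(A,B;C;x) = ABC(-1) B̄(x) ₂F₁(BC̄,B;BĀ;1/x)`. -/
theorem inversion (p : ℕ) [Fact p.Prime] [CharP F p] (hp : p ≠ 2)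
    (A B C : MulChar F ℂ) (x : F) (hx : x ≠ 0) :
    F21 A B C x =
      (A * B * C) (-1) * B⁻¹ x * F21 (B * C⁻¹) B (B * A⁻¹) (1 / x) := by
  classical
  have hone : ∀ z : F, z ≠ 0 → (1 : MulChar F ℂ) z = 1 := fun z hz => by
    simpa using MulChar.one_apply_coe (isUnit_iff_ne_zero.mpr hz).unit
  have hD : B⁻¹ * (B * A⁻¹) = A⁻¹ := by group
  have hE : (B * C⁻¹)⁻¹ = B⁻¹ * C := by rw [mul_inv_rev, inv_inv, mul_comm]
  have hsum : ∑ z : F, B z * (B⁻¹ * (B * A⁻¹)) (z - 1) * (B * C⁻¹)⁻¹ (1 - (1/x) * z)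
      = (B x * (A⁻¹ (-1) * (B⁻¹ * C) (-1))) *
        ∑ y : F, B y * (B⁻¹ * C) (y - 1) * A⁻¹ (1 - x * y) := by
    rw [hD, hE, Finset.mul_sum,
      ← Equiv.sum_comp (Equiv.mulLeft₀ x hx)
        (fun z => B z * A⁻¹ (z - 1) * (B⁻¹ * C) (1 - (1/x) * z))]
    refine Finset.sum_congr rfl fun y _ => ?_
    have h1 : (1/x) * ((Equiv.mulLeft₀ x hx) y) = y := by
      simp [Equiv.mulLeft₀, one_div, inv_mul_cancel_left₀ hx]
    have h2 : ((Equiv.mulLeft₀ x hx) y : F) = x * y := rfl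
    rw [h1, h2, show x * y - 1 = (-1) * (1 - x * y) by ring,
      show (1 : F) - y = (-1) * (y - 1) by ring, map_mul, map_mul, map_mul]
    ring
  unfold F21
  rw [hsum, hone x hx, hone (1/x) (by simp [hx])]
  have hc : (A * B * C) (-1) * B⁻¹ x *
      (B x * (A⁻¹ (-1) * (B⁻¹ * C) (-1))) = 1 := by
    have hBx : B⁻¹ x * B x = 1 := by
      rw [← MulChar.mul_apply, inv_mul_cancel]; exact hone x hx
    have sq : ∀ χ : MulChar F ℂ, χ (-1) * χ (-1) = 1 := fun χ => by
      rw [← map_mul]; norm_num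
    have hneg : (A * B * C) (-1) * (A⁻¹ (-1) * (B⁻¹ * C) (-1)) = 1 := by
      simp only [MulChar.mul_apply, MulChar.inv_apply', inv_neg, inv_one]
      calc A (-1) * B (-1) * C (-1) * (A (-1) * (B (-1) * C (-1)))
          = (A (-1) * A (-1)) * ((B (-1) * B (-1)) * (C (-1) * C (-1))) := by ring
        _ = 1 := by rw [sq A, sq B, sq C]; norm_num
    calc (A * B * C) (-1) * B⁻¹ x * (B x * (A⁻¹ (-1) * (B⁻¹ * C) (-1)))
        = ((A * B * C) (-1) * (A⁻¹ (-1) * (B⁻¹ * C) (-1))) * (B⁻¹ x * B x) := by ring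
      _ = 1 := by rw [hneg, hBx, one_mul]
  calc (1 / (Fintype.card F : ℂ)) * ∑ y : F, B y * (B⁻¹ * C) (y - 1) * A⁻¹ (1 - x * y)
      = ((A * B * C) (-1) * B⁻¹ x * (B x * (A⁻¹ (-1) * (B⁻¹ * C) (-1)))) *
        ((1 / (Fintype.card F : ℂ)) * ∑ y : F, B y * (B⁻¹ * C) (y - 1) * A⁻¹ (1 - x * y)) := by
        rw [hc, one_mul]
    _ = _ := by ring
end

section
/- For nontrivial characters A²B̄ and φĀB on F_q, the Gauss-sum representation Σ_t Σ_{w≠0} Σ_{z≠0} A²B̄(w)·φĀB(z)·ζ^{w(1-t)+z(y-t²)} equals A²B̄(2)·φ(-1)·G(φ)·G(A)·Σ_w A²B̄(w)·Ā(y-1+(w+1)²), provided A is nontrivial. -/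
open Complex Finset

variable {F : Type*} [Field F] [Fintype F]

set_option linter.unusedSectionVars false

noncomputable def zchar (p : ℕ) [Fact p.Prime] [CharP F p] : AddChar F ℂ :=
  letI := ZMod.algebra F p
  (ZMod.stdAddChar (N := p)).compAddMonoidHom (Algebra.trace (ZMod p) F).toAddMonoidHom

lemma zchar_apply (p : ℕ) [Fact p.Prime] [CharP F p] (x : F) :
    zchar (F := F) p x = zetaChar p x := by
  letI := ZMod.algebra F p
  simp [zchar, zetaChar, ZMod.stdAddChar_apply, ZMod.toCircle_apply]

lemma zchar_primitive (p : ℕ) [Fact p.Prime] [CharP F p] :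
    (zchar (F := F) p).IsPrimitive := by
  have hr : ringChar F = p := ringChar.eq F p
  subst hr
  letI := ZMod.algebra F (ringChar F)
  apply AddChar.IsPrimitive.of_ne_one
  intro h
  obtain ⟨b, hb⟩ := FiniteField.trace_to_zmod_nondegenerate F (one_ne_zero (α := F))
  rw [one_mul] at hb
  apply hb
  have := DFunLike.congr_fun h b
  simp only [zchar, AddChar.compAddMonoidHom_apply, AddChar.one_apply] at this
  have h0 : ZMod.stdAddChar (N := ringChar F) 0 = 1 := by simp
  exact ZMod.injective_stdAddChar (this.trans h0.symm)

lemma phi_eq [DecidableEq F] (φ : MulChar F ℂ) (hφ : φ ≠ 1) (hφ2 : φ * φ = 1) :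
    ∀ a : F, φ a = ((quadraticChar F a : ℤ) : ℂ) := by
  have key : ∀ a : F, a ≠ 0 → φ a * φ a = 1 := by
    intro a ha
    have := DFunLike.congr_fun hφ2 a
    rwa [MulChar.mul_apply, MulChar.one_apply (isUnit_iff_ne_zero.mpr ha)] at this
  have hsq : ∀ a : F, a ≠ 0 → IsSquare a → φ a = 1 := by
    rintro a ha ⟨r, rfl⟩
    have hr : r ≠ 0 := by rintro rfl; simp at ha
    rw [map_mul]; exact key r hr
  intro a
  rcases eq_or_ne a 0 with rfl | ha
  · simp [MulChar.map_zero]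
  by_cases hs : IsSquare a
  · rw [hsq a ha hs, (quadraticChar_one_iff_isSquare ha).mpr hs]; norm_num
  · rw [quadraticChar_neg_one_iff_not_isSquare.mpr hs]
    have h1 : φ a = 1 ∨ φ a = -1 := mul_self_eq_one_iff.mp (key a ha)
    rcases h1 with h1 | h1
    · exfalso
      apply hφ
      ext u
      rcases eq_or_ne ((u : F)) 0 with h0 | h0
      · exact absurd h0 u.ne_zero
      by_cases hb : IsSquare (u : F)
      · rw [hsq _ h0 hb, MulChar.one_apply (isUnit_iff_ne_zero.mpr h0)]
      · -- u * a⁻¹ is a square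
        have hai : ¬ IsSquare (a⁻¹ : F) := by
          intro ⟨s, hs'⟩
          exact hs ⟨s⁻¹, by rw [← mul_inv, ← hs', inv_inv]⟩
        have hq : quadraticChar F ((u : F) * a⁻¹) = 1 := by
          rw [map_mul, quadraticChar_neg_one_iff_not_isSquare.mpr hb,
            quadraticChar_neg_one_iff_not_isSquare.mpr hai]; ring
        have hsq2 : IsSquare ((u : F) * a⁻¹) :=
          (quadraticChar_one_iff_isSquare (by simp [h0, ha])).mp hq
        have : (u : F) = (u : F) * a⁻¹ * a := by field_simp
        rw [MulChar.one_apply (isUnit_iff_ne_zero.mpr h0), this, map_mul,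
          hsq _ (by simp [h0, ha]) hsq2, h1, one_mul]
    · rw [h1]; norm_num

lemma sum_sq_eval [DecidableEq F] (hF : ringChar F ≠ 2) (φ : MulChar F ℂ) (hφ : φ ≠ 1) (hφ2 : φ * φ = 1)
    (ψ : AddChar F ℂ) (hψ : ψ.IsPrimitive) (c : F) (hc : c ≠ 0) :
    ∑ s : F, ψ (c * s ^ 2) = φ c * gaussSum φ ψ := by
  have hfib : ∑ s : F, ψ (c * s ^ 2)
      = ∑ u : F, ∑ s ∈ Finset.univ.filter (fun s : F => s ^ 2 = u), ψ (c * u) := by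
    rw [← Finset.sum_fiberwise Finset.univ (fun s : F => s ^ 2) (fun s => ψ (c * s ^ 2))]
    refine Finset.sum_congr rfl fun u _ => Finset.sum_congr rfl fun s hs => ?_
    rw [Finset.mem_filter] at hs
    rw [hs.2]
  rw [hfib]
  have hcard : ∀ u : F, ((Finset.univ.filter (fun s : F => s ^ 2 = u)).card : ℂ)
      = φ u + 1 := by
    intro u
    have := quadraticChar_card_sqrts hF u
    have he : {x : F | x ^ 2 = u}.toFinset = Finset.univ.filter (fun s : F => s ^ 2 = u) := by
      ext x; simp
    rw [he] at this
    rw [phi_eq φ hφ hφ2 u]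
    exact_mod_cast congrArg (fun n : ℤ => (n : ℂ)) this
  simp_rw [Finset.sum_const, nsmul_eq_mul]
  have : ∑ u : F, (↑(Finset.univ.filter (fun s : F => s ^ 2 = u)).card : ℂ) * ψ (c * u)
      = ∑ u : F, (φ u + 1) * ψ (c * u) := by
    refine Finset.sum_congr rfl fun u _ => by rw [hcard u]
  rw [this]
  simp_rw [add_mul, one_mul, Finset.sum_add_distrib]
  have h0 : ∑ u : F, ψ (c * u) = 0 := by
    have := AddChar.sum_mulShift (R := F) (R' := ℂ) c hψ
    simp_rw [mul_comm] at this
    rw [this, if_neg hc, Nat.cast_zero]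
  rw [h0, add_zero]
  have hg : ∑ u : F, φ u * ψ (c * u) = gaussSum φ (ψ.mulShift c) := by
    simp [gaussSum, AddChar.mulShift_apply]
  rw [hg]
  have hu : IsUnit c := isUnit_iff_ne_zero.mpr hc
  have := gaussSum_mulShift φ ψ hu.unit
  have hφc : φ c * φ c = 1 := by
    have := DFunLike.congr_fun hφ2 c
    rwa [MulChar.mul_apply, MulChar.one_apply hu] at this
  calc gaussSum φ (ψ.mulShift c)
      = φ c * (φ c * gaussSum φ (ψ.mulShift c)) := by rw [← mul_assoc, hφc, one_mul]
    _ = φ c * gaussSum φ ψ := by rw [show (hu.unit : F) = c from rfl] at this; rw [this]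

lemma char_gauss_sum (A : MulChar F ℂ) (hA : A ≠ 1) (ψ : AddChar F ℂ) (c : F) :
    ∑ z : F, A z * ψ (z * c) = A⁻¹ c * gaussSum A ψ := by
  rcases eq_or_ne c 0 with rfl | hc
  · simp only [mul_zero, AddChar.map_zero_eq_one, mul_one]
    rw [MulChar.sum_eq_zero_of_ne_one hA, MulChar.map_zero, zero_mul]
  · have hu : IsUnit c := isUnit_iff_ne_zero.mpr hc
    have hgs := gaussSum_mulShift A ψ hu.unit
    rw [IsUnit.unit_spec] at hgs
    have h1 : gaussSum A (ψ.mulShift c) = ∑ z : F, A z * ψ (z * c) := by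
      simp [gaussSum, AddChar.mulShift_apply, mul_comm]
    rw [← h1]
    have hinv : A⁻¹ c * A c = 1 := by
      have h2 : (A⁻¹ * A) c = 1 := by
        rw [inv_mul_cancel]; exact MulChar.one_apply hu
      rwa [MulChar.mul_apply] at h2
    calc gaussSum A (ψ.mulShift c)
        = (A⁻¹ c * A c) * gaussSum A (ψ.mulShift c) := by rw [hinv, one_mul]
      _ = A⁻¹ c * gaussSum A ψ := by rw [mul_assoc, hgs]

/-- Gauss-sum evaluation of the triple sum from the proof of Lemma 1. -/
theorem triple_sum_eval [DecidableEq F] (p : ℕ) [Fact p.Prime] [CharP F p] (hp : p ≠ 2)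
    (φ : MulChar F ℂ) (hφ : φ ≠ 1) (hφ2 : φ * φ = 1)
    (A B : MulChar F ℂ) (hA : A ≠ 1) (hA2B : A ^ 2 * B⁻¹ ≠ 1) (hφAB : φ * A⁻¹ * B ≠ 1)
    (y : F) :
    (∑ t : F, ∑ w ∈ Finset.univ \ {(0 : F)}, ∑ z ∈ Finset.univ \ {(0 : F)},
        (A ^ 2 * B⁻¹) w * (φ * A⁻¹ * B) z * zetaChar p (w * (1 - t) + z * (y - t ^ 2))) =
      (A ^ 2 * B⁻¹) (2 : F) * φ (-1) * gaussS p φ * gaussS p A *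
        ∑ w : F, (A ^ 2 * B⁻¹) w * A⁻¹ (y - 1 + (w + 1) ^ 2) := by
  have hψ : (zchar (F := F) p).IsPrimitive := zchar_primitive p
  set ψ := zchar (F := F) p with hψdef
  have hrc : ringChar F = p := ringChar.eq F p
  have hF2 : ringChar F ≠ 2 := by rw [hrc]; exact hp
  have h2 : (2 : F) ≠ 0 := Ring.two_ne_zero hF2
  have hgS : ∀ χ : MulChar F ℂ, gaussS p χ = gaussSum χ ψ := by
    intro χ
    unfold gaussS gaussSum
    exact Finset.sum_congr rfl fun x _ => by rw [zchar_apply]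
  set C := A ^ 2 * B⁻¹ with hC
  set D := φ * A⁻¹ * B with hD
  set Gφ := gaussSum φ ψ with hGφ
  set GA := gaussSum A ψ with hGA
  -- the pointwise character identity  C z * (φ z * D z) = A z
  have hCφD : ∀ z : F, C z * (φ z * D z) = A z := by
    intro z
    rcases eq_or_ne z 0 with rfl | hz
    · simp [MulChar.map_zero]
    have hu : IsUnit z := isUnit_iff_ne_zero.mpr hz
    have hφz : φ z * φ z = 1 := by
      have h1 := DFunLike.congr_fun hφ2 z
      rwa [MulChar.mul_apply, MulChar.one_apply hu] at h1
    have hAz : A z ≠ 0 := (hu.map A).ne_zero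
    have hBz : B z ≠ 0 := (hu.map B).ne_zero
    simp only [hC, hD, MulChar.mul_apply, MulChar.pow_apply' _ two_ne_zero,
      MulChar.inv_apply_eq_inv']
    field_simp
    linear_combination hφz
  -- Step 1: replace zetaChar and extend sums to univ
  have step1 : (∑ t : F, ∑ w ∈ Finset.univ \ {(0 : F)}, ∑ z ∈ Finset.univ \ {(0 : F)},
        C w * D z * zetaChar p (w * (1 - t) + z * (y - t ^ 2))) =
      ∑ t : F, ∑ w : F, ∑ z : F, C w * D z * ψ (w * (1 - t) + z * (y - t ^ 2)) := by
    refine Finset.sum_congr rfl fun t _ => ?_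
    rw [show (Finset.univ \ {(0 : F)}) = Finset.univ.erase 0 from by
      rw [← Finset.sdiff_singleton_eq_erase]]
    rw [Finset.sum_erase _ (by simp [MulChar.map_zero])]
    refine Finset.sum_congr rfl fun w _ => ?_
    rw [Finset.sum_erase _ (by simp [MulChar.map_zero])]
    exact Finset.sum_congr rfl fun z _ => by rw [zchar_apply]
  -- Step 3: evaluate the t-sum via completing the square
  have tsum : ∀ w z : F, (∑ t : F, C w * D z * ψ (w * (1 - t) + z * (y - t ^ 2))) =
      C w * (D z * φ (-z)) * Gφ * ψ (w + z * y + w ^ 2 / (4 * z)) := by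
    intro w z
    rcases eq_or_ne z 0 with rfl | hz
    · simp [MulChar.map_zero]
    have h4 : (4 : F) ≠ 0 := by
      have h := mul_ne_zero h2 h2; rwa [show (2 : F) * 2 = 4 by norm_num] at h
    have harg : ∀ t : F, w * (1 - t) + z * (y - t ^ 2) =
        (w + z * y + w ^ 2 / (4 * z)) + (-z) * ((t + w / (2 * z)) ^ 2) := by
      intro t; field_simp; ring
    have hsplit : (∑ t : F, C w * D z * ψ (w * (1 - t) + z * (y - t ^ 2))) =
        ∑ t : F, C w * D z * (ψ (w + z * y + w ^ 2 / (4 * z)) *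
          ψ ((-z) * ((t + w / (2 * z)) ^ 2))) :=
      Finset.sum_congr rfl fun t _ => by rw [harg t, AddChar.map_add_eq_mul]
    rw [hsplit]
    have hpull : (∑ t : F, C w * D z * (ψ (w + z * y + w ^ 2 / (4 * z)) *
          ψ ((-z) * ((t + w / (2 * z)) ^ 2)))) =
        (C w * D z * ψ (w + z * y + w ^ 2 / (4 * z))) *
          ∑ t : F, ψ ((-z) * ((t + w / (2 * z)) ^ 2)) := by
      rw [Finset.mul_sum]
      exact Finset.sum_congr rfl fun t _ => by ring
    rw [hpull]
    have hre : (∑ t : F, ψ ((-z) * ((t + w / (2 * z)) ^ 2))) =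
        ∑ s : F, ψ ((-z) * s ^ 2) :=
      Fintype.sum_equiv (Equiv.addRight (w / (2 * z))) _ _ (fun t => rfl)
    rw [hre, sum_sq_eval hF2 φ hφ hφ2 ψ hψ (-z) (neg_ne_zero.mpr hz), ← hGφ]
    ring
  -- Step 5: substitute w = 2zv
  have step5 : ∀ z : F, (∑ w : F, C w * (D z * φ (-z)) * Gφ *
        ψ (w + z * y + w ^ 2 / (4 * z))) =
      φ (-1) * C 2 * Gφ * ∑ v : F, C v * (A z * ψ (z * (y - 1 + (v + 1) ^ 2))) := by
    intro z
    rcases eq_or_ne z 0 with rfl | hz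
    · simp [MulChar.map_zero]
    have h2z : (2 * z : F) ≠ 0 := mul_ne_zero h2 hz
    rw [show (∑ w : F, C w * (D z * φ (-z)) * Gφ * ψ (w + z * y + w ^ 2 / (4 * z))) =
        ∑ v : F, C (2 * z * v) * (D z * φ (-z)) * Gφ *
          ψ (2 * z * v + z * y + (2 * z * v) ^ 2 / (4 * z)) from
      (Fintype.sum_bijective _ (mulLeft_bijective₀ (2 * z) h2z)
        (fun v : F => C (2 * z * v) * (D z * φ (-z)) * Gφ *
          ψ (2 * z * v + z * y + (2 * z * v) ^ 2 / (4 * z)))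
        (fun w : F => C w * (D z * φ (-z)) * Gφ * ψ (w + z * y + w ^ 2 / (4 * z)))
        (fun v => rfl)).symm]
    rw [Finset.mul_sum]
    refine Finset.sum_congr rfl fun v _ => ?_
    have hCm : C (2 * z * v) = C 2 * (C z * C v) := by
      rw [show (2 * z * v : F) = 2 * (z * v) by ring, map_mul, map_mul]
    have hφm : φ (-z) = φ (-1) * φ z := by
      rw [show (-z : F) = -1 * z by ring, map_mul]
    have hargm : 2 * z * v + z * y + (2 * z * v) ^ 2 / (4 * z) =
        z * (y - 1 + (v + 1) ^ 2) := by
      have h4 : (4 : F) ≠ 0 := by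
        have h := mul_ne_zero h2 h2; rwa [show (2 : F) * 2 = 4 by norm_num] at h
      field_simp; ring
    rw [hCm, hφm, hargm, ← hCφD z]
    ring
  -- assemble
  calc (∑ t : F, ∑ w ∈ Finset.univ \ {(0 : F)}, ∑ z ∈ Finset.univ \ {(0 : F)},
        C w * D z * zetaChar p (w * (1 - t) + z * (y - t ^ 2)))
      = ∑ t : F, ∑ w : F, ∑ z : F, C w * D z * ψ (w * (1 - t) + z * (y - t ^ 2)) := step1
    _ = ∑ w : F, ∑ z : F, ∑ t : F, C w * D z * ψ (w * (1 - t) + z * (y - t ^ 2)) := by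
        rw [Finset.sum_comm]
        exact Finset.sum_congr rfl fun w _ => Finset.sum_comm
    _ = ∑ w : F, ∑ z : F, C w * (D z * φ (-z)) * Gφ * ψ (w + z * y + w ^ 2 / (4 * z)) :=
        Finset.sum_congr rfl fun w _ => Finset.sum_congr rfl fun z _ => tsum w z
    _ = ∑ z : F, ∑ w : F, C w * (D z * φ (-z)) * Gφ * ψ (w + z * y + w ^ 2 / (4 * z)) :=
        Finset.sum_comm
    _ = ∑ z : F, φ (-1) * C 2 * Gφ * ∑ v : F, C v * (A z * ψ (z * (y - 1 + (v + 1) ^ 2))) :=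
        Finset.sum_congr rfl fun z _ => step5 z
    _ = φ (-1) * C 2 * Gφ * ∑ z : F, ∑ v : F, C v * (A z * ψ (z * (y - 1 + (v + 1) ^ 2))) := by
        rw [Finset.mul_sum]
    _ = φ (-1) * C 2 * Gφ * ∑ v : F, ∑ z : F, C v * (A z * ψ (z * (y - 1 + (v + 1) ^ 2))) := by
        rw [Finset.sum_comm]
    _ = φ (-1) * C 2 * Gφ * ∑ v : F, C v * (A⁻¹ (y - 1 + (v + 1) ^ 2) * GA) := by
        refine congrArg _ (Finset.sum_congr rfl fun v _ => ?_)
        rw [← Finset.mul_sum, char_gauss_sum A hA ψ (y - 1 + (v + 1) ^ 2), hGA]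
    _ = C 2 * φ (-1) * gaussS p φ * gaussS p A *
        ∑ w : F, C w * A⁻¹ (y - 1 + (w + 1) ^ 2) := by
        rw [hgS φ, hgS A, ← hGφ, ← hGA, Finset.mul_sum, Finset.mul_sum]
        exact Finset.sum_congr rfl fun v _ => by ring
end
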